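/- Let ν > 0, k > 0, and let r_{ν,k} be as defined. Then lim_{t→∞} t^{ν+1}·r_{ν,k}(t) = k²/(2^{ν+1}·(ν+1)·Γ(ν)), i.e. r_{ν,k}(t) ∼ C/t^{ν+1} as t → ∞ with C = k²/(2^{ν+1}(ν+1)Γ(ν)). -/

import Mathlib

open MeasureTheory Real Filter Set Topology

/-- The modified Bessel function of the first kind, defined by its series:
`I_ν(y) = Σ_{j=0}^∞ (y/2)^{ν+2j} / (j!·Γ(ν+j+1))`. -/
noncomputable def besselI (ν y : ℝ) : ℝ :=
  ∑' j : ℕ, (y / 2) ^ (ν + 2 * (j : ℝ)) / ((Nat.factorial j : ℝ) * Real.Gamma (ν + (j : ℝ) + 1))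

/-- The explicit integral formula for the Bessel(δ) call price, `δ = 2ν+2`, strike `K = k^{−2ν}`:
`r_{ν,k}(t) = ν·k^{−ν}·∫_0^{k/t} y^{−1}·e^{−y/(2k)}·[ y^ν/(2^ν Γ(1+ν)) − e^{−ky/2}·I_ν(y) ] dy`. -/
noncomputable def rBes (ν k t : ℝ) : ℝ :=
  ν * k ^ (-ν) *
    ∫ y in (0:ℝ)..(k / t),
      y⁻¹ * Real.exp (-y / (2 * k)) *
        (y ^ ν / ((2:ℝ) ^ ν * Real.Gamma (1 + ν)) - Real.exp (-(k * y) / 2) * besselI ν y)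

namespace Stmt8Aux

/-- The entire part of the Bessel series: `gs ν x = Σ_j x^j/(j!·Γ(ν+j+1))`. -/
noncomputable def gs (ν x : ℝ) : ℝ :=
  ∑' j : ℕ, x ^ j / ((Nat.factorial j : ℝ) * Real.Gamma (ν + (j : ℝ) + 1))

lemma gam_pos {ν : ℝ} (hν : 0 < ν) (j : ℕ) : 0 < Real.Gamma (ν + (j : ℝ) + 1) :=
  Real.Gamma_pos_of_pos (by positivity)

lemma gam_lb {ν : ℝ} (hν : 0 < ν) (j : ℕ) :
    (j.factorial : ℝ) * Real.Gamma (ν + 1) ≤ Real.Gamma (ν + (j : ℝ) + 1) := by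
  induction j with
  | zero => simp
  | succ n ih =>
    have h0 : 0 < Real.Gamma (ν + (n : ℝ) + 1) := gam_pos hν n
    have hg1 : 0 < Real.Gamma (ν + 1) := Real.Gamma_pos_of_pos (by linarith)
    have h2 : Real.Gamma (ν + ((n + 1 : ℕ) : ℝ) + 1)
        = (ν + (n : ℝ) + 1) * Real.Gamma (ν + (n : ℝ) + 1) := by
      have h1 : (ν + ((n + 1 : ℕ) : ℝ) + 1) = (ν + (n : ℝ) + 1) + 1 := by push_cast; ring
      rw [h1, Real.Gamma_add_one (by positivity)]
    have h3 : (((n + 1 : ℕ)).factorial : ℝ) = ((n : ℝ) + 1) * (n.factorial : ℝ) := by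
      rw [Nat.factorial_succ]; push_cast; ring
    rw [h2, h3]
    have h4 : ((n : ℝ) + 1) ≤ ν + (n : ℝ) + 1 := by linarith
    have h5 : (0 : ℝ) ≤ (n.factorial : ℝ) * Real.Gamma (ν + 1) := by positivity
    calc ((n : ℝ) + 1) * (n.factorial : ℝ) * Real.Gamma (ν + 1)
        = ((n : ℝ) + 1) * ((n.factorial : ℝ) * Real.Gamma (ν + 1)) := by ring
      _ ≤ (ν + (n : ℝ) + 1) * Real.Gamma (ν + (n : ℝ) + 1) :=
          mul_le_mul h4 ih h5 (by linarith)

lemma gs_term_bound {ν : ℝ} (hν : 0 < ν) (x : ℝ) (j : ℕ) :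
    ‖x ^ j / ((j.factorial : ℝ) * Real.Gamma (ν + (j : ℝ) + 1))‖
      ≤ (1 / Real.Gamma (ν + 1)) * (|x| ^ j / (j.factorial : ℝ)) := by
  have hg := gam_pos hν j
  have hg1 : 0 < Real.Gamma (ν + 1) := Real.Gamma_pos_of_pos (by linarith)
  have hfac : (0 : ℝ) < (j.factorial : ℝ) := by exact_mod_cast j.factorial_pos
  have hfac1 : (1 : ℝ) ≤ (j.factorial : ℝ) := by exact_mod_cast j.factorial_pos
  have hden : (j.factorial : ℝ) * Real.Gamma (ν + 1)
      ≤ (j.factorial : ℝ) * Real.Gamma (ν + (j : ℝ) + 1) := by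
    have h1 : Real.Gamma (ν + 1) ≤ Real.Gamma (ν + (j : ℝ) + 1) := by
      calc Real.Gamma (ν + 1) = 1 * Real.Gamma (ν + 1) := (one_mul _).symm
        _ ≤ (j.factorial : ℝ) * Real.Gamma (ν + 1) :=
            mul_le_mul_of_nonneg_right hfac1 hg1.le
        _ ≤ Real.Gamma (ν + (j : ℝ) + 1) := gam_lb hν j
    exact mul_le_mul_of_nonneg_left h1 hfac.le
  have heq : (1 / Real.Gamma (ν + 1)) * (|x| ^ j / (j.factorial : ℝ))
      = |x| ^ j / ((j.factorial : ℝ) * Real.Gamma (ν + 1)) := by ring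
  rw [Real.norm_eq_abs, heq, abs_div, abs_pow, abs_of_pos (mul_pos hfac hg)]
  exact div_le_div_of_nonneg_left (by positivity) (mul_pos hfac hg1) hden

lemma gs_summable {ν : ℝ} (hν : 0 < ν) (x : ℝ) :
    Summable (fun j : ℕ => x ^ j / ((j.factorial : ℝ) * Real.Gamma (ν + (j : ℝ) + 1))) :=
  Summable.of_norm_bounded ((Real.summable_pow_div_factorial |x|).mul_left _)
    (gs_term_bound hν x)

lemma gs_zero {ν : ℝ} (hν : 0 < ν) : gs ν 0 = 1 / Real.Gamma (ν + 1) := by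
  rw [gs, tsum_eq_single 0]
  · norm_num
  · intro j hj
    rw [zero_pow hj, zero_div]

lemma exp_tsum (x : ℝ) : Real.exp x = ∑' n : ℕ, x ^ n / (n.factorial : ℝ) := by
  rw [Real.exp_eq_exp_ℝ, NormedSpace.exp_eq_tsum_div]

lemma gs_sub {ν : ℝ} (hν : 0 < ν) {x : ℝ} (hx : 0 ≤ x) :
    |gs ν 0 - gs ν x| ≤ x * Real.exp x / Real.Gamma (ν + 1) := by
  have hg1 : 0 < Real.Gamma (ν + 1) := Real.Gamma_pos_of_pos (by linarith)
  have hsum := gs_summable hν x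
  have htail : Summable (fun j : ℕ =>
      x ^ (j + 1) / (((j + 1).factorial : ℝ) * Real.Gamma (ν + ((j + 1 : ℕ) : ℝ) + 1))) := by
    exact_mod_cast (summable_nat_add_iff 1).2 hsum
  have h0 : gs ν x - gs ν 0 = ∑' j : ℕ,
      x ^ (j + 1) / (((j + 1).factorial : ℝ) * Real.Gamma (ν + ((j + 1 : ℕ) : ℝ) + 1)) := by
    rw [gs, Summable.tsum_eq_zero_add hsum, gs_zero hν]
    push_cast
    norm_num
  have hterm_nonneg : ∀ j : ℕ, 0 ≤
      x ^ (j + 1) / (((j + 1).factorial : ℝ) * Real.Gamma (ν + ((j + 1 : ℕ) : ℝ) + 1)) := by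
    intro j
    have h1 := gam_pos hν (j + 1)
    have hf : (0:ℝ) < ((j+1).factorial : ℝ) := by exact_mod_cast (j+1).factorial_pos
    exact div_nonneg (pow_nonneg hx _) (by positivity)
  have hbnd : ∀ j : ℕ,
      x ^ (j + 1) / (((j + 1).factorial : ℝ) * Real.Gamma (ν + ((j + 1 : ℕ) : ℝ) + 1))
        ≤ (x / Real.Gamma (ν + 1)) * (x ^ j / (j.factorial : ℝ)) := by
    intro j
    have hgj := gam_pos hν (j + 1)
    have hfj : (0:ℝ) < (j.factorial : ℝ) := by exact_mod_cast j.factorial_pos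
    have hfj1 : (j.factorial : ℝ) ≤ ((j + 1).factorial : ℝ) := by
      exact_mod_cast Nat.factorial_le (Nat.le_succ j)
    have hge : Real.Gamma (ν + 1) ≤ Real.Gamma (ν + ((j + 1 : ℕ) : ℝ) + 1) := by
      have hf1 : (1:ℝ) ≤ ((j+1).factorial : ℝ) := by exact_mod_cast (j+1).factorial_pos
      calc Real.Gamma (ν + 1) = 1 * Real.Gamma (ν + 1) := (one_mul _).symm
        _ ≤ ((j+1).factorial : ℝ) * Real.Gamma (ν + 1) :=
            mul_le_mul_of_nonneg_right hf1 hg1.le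
        _ ≤ _ := gam_lb hν (j + 1)
    have heq : (x / Real.Gamma (ν + 1)) * (x ^ j / (j.factorial : ℝ))
        = x ^ (j + 1) / ((j.factorial : ℝ) * Real.Gamma (ν + 1)) := by
      rw [pow_succ]; ring
    rw [heq]
    exact div_le_div_of_nonneg_left (pow_nonneg hx _) (mul_pos hfj hg1)
      (mul_le_mul hfj1 hge hg1.le (by positivity))
  have hrsum : Summable (fun j : ℕ => (x / Real.Gamma (ν + 1)) * (x ^ j / (j.factorial : ℝ))) :=
    (Real.summable_pow_div_factorial x).mul_left _
  have htail_le : (∑' j : ℕ,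
      x ^ (j + 1) / (((j + 1).factorial : ℝ) * Real.Gamma (ν + ((j + 1 : ℕ) : ℝ) + 1)))
        ≤ x * Real.exp x / Real.Gamma (ν + 1) := by
    calc (∑' j : ℕ,
        x ^ (j + 1) / (((j + 1).factorial : ℝ) * Real.Gamma (ν + ((j + 1 : ℕ) : ℝ) + 1)))
        ≤ ∑' j : ℕ, (x / Real.Gamma (ν + 1)) * (x ^ j / (j.factorial : ℝ)) :=
        Summable.tsum_le_tsum hbnd htail hrsum
      _ = (x / Real.Gamma (ν + 1)) * ∑' j : ℕ, x ^ j / (j.factorial : ℝ) := tsum_mul_left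
      _ = x * Real.exp x / Real.Gamma (ν + 1) := by rw [← exp_tsum]; ring
  have htail_nonneg : 0 ≤ gs ν x - gs ν 0 := by
    rw [h0]; exact tsum_nonneg hterm_nonneg
  rw [abs_sub_comm, abs_of_nonneg htail_nonneg, h0]
  exact htail_le

lemma gs_contAt {ν : ℝ} (hν : 0 < ν) (x0 : ℝ) : ContinuousAt (gs ν) x0 := by
  set R : ℝ := |x0| + 1 with hR
  have hmem : x0 ∈ Ioo (-R) R := by
    constructor
    · have := neg_abs_le x0; simp only [hR]; linarith
    · have := le_abs_self x0; simp only [hR]; linarith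
  have hcont : ContinuousOn (gs ν) (Ioo (-R) R) := by
    apply continuousOn_tsum
      (u := fun j : ℕ => (1 / Real.Gamma (ν + 1)) * (R ^ j / (j.factorial : ℝ)))
    · intro i
      exact ((continuous_pow i).div_const _).continuousOn
    · exact (Real.summable_pow_div_factorial R).mul_left _
    · intro n x hx
      refine (gs_term_bound hν x n).trans ?_
      have hg1 : 0 < Real.Gamma (ν + 1) := Real.Gamma_pos_of_pos (by linarith)
      have hxR : |x| ≤ R := by
        rw [abs_le]; exact ⟨hx.1.le, hx.2.le⟩
      have hfn : (0:ℝ) < (n.factorial : ℝ) := by exact_mod_cast n.factorial_pos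
      gcongr
  exact hcont.continuousAt (Ioo_mem_nhds hmem.1 hmem.2)

lemma besselI_eq {ν : ℝ} (hν : 0 < ν) {y : ℝ} (hy : 0 < y) :
    besselI ν y = (y / 2) ^ ν * gs ν ((y / 2) ^ 2) := by
  rw [besselI, gs, ← tsum_mul_left]
  refine tsum_congr fun j => ?_
  have h2 : (0:ℝ) < y / 2 := by linarith
  have hpow : (y / 2 : ℝ) ^ (ν + 2 * (j : ℝ)) = (y / 2) ^ ν * ((y / 2) ^ 2) ^ j := by
    rw [Real.rpow_add h2]
    congr 1
    have h3 : (2 * (j : ℝ)) = ((2 * j : ℕ) : ℝ) := by push_cast; ring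
    rw [h3, Real.rpow_natCast, pow_mul]
  rw [hpow, mul_div_assoc]

/-- The auxiliary function `H`. -/
noncomputable def Hf (ν k y : ℝ) : ℝ :=
  1 / Real.Gamma (ν + 1) - Real.exp (-(k * y) / 2) * gs ν ((y / 2) ^ 2)

/-- The integrand of `rBes`. -/
noncomputable def fker (ν k y : ℝ) : ℝ :=
  y⁻¹ * Real.exp (-y / (2 * k)) *
    (y ^ ν / ((2:ℝ) ^ ν * Real.Gamma (1 + ν)) - Real.exp (-(k * y) / 2) * besselI ν y)

lemma fker_eq {ν k : ℝ} (hν : 0 < ν) {y : ℝ} (hy : 0 < y) :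
    fker ν k y = Real.exp (-y / (2 * k)) * ((y / 2) ^ ν) * (Hf ν k y / y) := by
  rw [fker, besselI_eq hν hy, Hf]
  have h1 : y ^ ν / ((2:ℝ) ^ ν * Real.Gamma (1 + ν)) = (y / 2) ^ ν * (1 / Real.Gamma (ν + 1)) := by
    rw [Real.div_rpow hy.le (by norm_num : (0:ℝ) ≤ 2), add_comm 1 ν]
    ring
  rw [h1]
  ring

lemma hf_abs_le {ν k : ℝ} (hν : 0 < ν) (hk : 0 < k) {y : ℝ} (hy : 0 < y) :
    |Hf ν k y| ≤ y * (k / 2 + (y / 4) * Real.exp (y ^ 2 / 4)) / Real.Gamma (ν + 1) := by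
  have hg1 : 0 < Real.Gamma (ν + 1) := Real.Gamma_pos_of_pos (by linarith)
  have h24 : ((y / 2 : ℝ)) ^ 2 = y ^ 2 / 4 := by ring
  have hx : (0:ℝ) ≤ y ^ 2 / 4 := by positivity
  have hsplit : Hf ν k y =
      (1 - Real.exp (-(k * y) / 2)) * (1 / Real.Gamma (ν + 1))
        + Real.exp (-(k * y) / 2) * (gs ν 0 - gs ν (y ^ 2 / 4)) := by
    rw [Hf, gs_zero hν, h24]; ring
  rw [hsplit]
  have hexple : Real.exp (-(k * y) / 2) ≤ 1 := by
    rw [← Real.exp_zero]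
    apply Real.exp_le_exp.2
    have : 0 ≤ k * y := by positivity
    linarith
  have he1 : |1 - Real.exp (-(k * y) / 2)| ≤ k * y / 2 := by
    rw [abs_of_nonneg (by linarith)]
    have := Real.add_one_le_exp (-(k * y) / 2)
    linarith
  have he2 : |gs ν 0 - gs ν (y ^ 2 / 4)| ≤ (y ^ 2 / 4) * Real.exp (y ^ 2 / 4) / Real.Gamma (ν + 1) :=
    gs_sub hν hx
  have hA : |(1 - Real.exp (-(k * y) / 2)) * (1 / Real.Gamma (ν + 1))|
      ≤ (k * y / 2) * (1 / Real.Gamma (ν + 1)) := by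
    rw [abs_mul, abs_of_nonneg (by positivity : (0:ℝ) ≤ 1 / Real.Gamma (ν + 1))]
    exact mul_le_mul_of_nonneg_right he1 (by positivity)
  have hB : |Real.exp (-(k * y) / 2) * (gs ν 0 - gs ν (y ^ 2 / 4))|
      ≤ (y ^ 2 / 4) * Real.exp (y ^ 2 / 4) / Real.Gamma (ν + 1) := by
    rw [abs_mul, abs_of_nonneg (Real.exp_nonneg _)]
    calc Real.exp (-(k * y) / 2) * |gs ν 0 - gs ν (y ^ 2 / 4)|
        ≤ 1 * ((y ^ 2 / 4) * Real.exp (y ^ 2 / 4) / Real.Gamma (ν + 1)) :=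
          mul_le_mul hexple he2 (abs_nonneg _) zero_le_one
      _ = _ := one_mul _
  have heq : (k * y / 2) * (1 / Real.Gamma (ν + 1))
      + (y ^ 2 / 4) * Real.exp (y ^ 2 / 4) / Real.Gamma (ν + 1)
      = y * (k / 2 + (y / 4) * Real.exp (y ^ 2 / 4)) / Real.Gamma (ν + 1) := by ring
  calc |(1 - Real.exp (-(k * y) / 2)) * (1 / Real.Gamma (ν + 1))
        + Real.exp (-(k * y) / 2) * (gs ν 0 - gs ν (y ^ 2 / 4))|
      ≤ _ + _ := abs_add_le _ _
    _ ≤ (k * y / 2) * (1 / Real.Gamma (ν + 1))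
        + (y ^ 2 / 4) * Real.exp (y ^ 2 / 4) / Real.Gamma (ν + 1) := add_le_add hA hB
    _ = _ := heq

lemma hf_div_tendsto {ν k : ℝ} (hν : 0 < ν) (hk : 0 < k) :
    Tendsto (fun y => Hf ν k y / y) (𝓝[>] (0:ℝ)) (𝓝 (k / (2 * Real.Gamma (ν + 1)))) := by
  have hg1 : 0 < Real.Gamma (ν + 1) := Real.Gamma_pos_of_pos (by linarith)
  have hder : HasDerivAt (fun y : ℝ => 1 - Real.exp (-(k * y) / 2)) (k / 2) 0 := by
    have h1 : HasDerivAt (fun y : ℝ => -(k * y) / 2) (-(k * 1) / 2) 0 :=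
      (((hasDerivAt_id (0:ℝ)).const_mul k).neg).div_const 2
    have h2 := (Real.hasDerivAt_exp (-(k * 0) / 2)).comp 0 h1
    have h3 := h2.const_sub 1
    simp only [Function.comp_def] at h3
    have h4 : (k / 2 : ℝ) = -(Real.exp (-(k * 0) / 2) * (-(k * 1) / 2)) := by
      rw [mul_zero, neg_zero, zero_div, Real.exp_zero]; ring
    rw [h4]
    exact h3
  have hslope := hasDerivAt_iff_tendsto_slope.1 hder
  have hsub : Ioi (0:ℝ) ⊆ {(0:ℝ)}ᶜ := fun x hx => ne_of_gt hx
  have hslope' : Tendsto (fun y : ℝ => (1 - Real.exp (-(k * y) / 2)) / y)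
      (𝓝[>] (0:ℝ)) (𝓝 (k / 2)) := by
    apply (hslope.mono_left (nhdsWithin_mono 0 hsub)).congr
    intro y
    rw [slope_def_field]
    norm_num
  have hA : Tendsto (fun y : ℝ => (1 - Real.exp (-(k * y) / 2)) / y * (1 / Real.Gamma (ν + 1)))
      (𝓝[>] (0:ℝ)) (𝓝 ((k / 2) * (1 / Real.Gamma (ν + 1)))) :=
    hslope'.mul_const _
  have hB : Tendsto (fun y : ℝ => Real.exp (-(k * y) / 2) * ((gs ν 0 - gs ν ((y / 2) ^ 2)) / y))
      (𝓝[>] (0:ℝ)) (𝓝 0) := by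
    apply squeeze_zero_norm'
      (a := fun y : ℝ => (y / 4) * Real.exp (y ^ 2 / 4) / Real.Gamma (ν + 1))
    · filter_upwards [self_mem_nhdsWithin] with y hy
      have hy0 : (0:ℝ) < y := hy
      have h24 : ((y / 2 : ℝ)) ^ 2 = y ^ 2 / 4 := by ring
      have hexple : Real.exp (-(k * y) / 2) ≤ 1 := by
        rw [← Real.exp_zero]
        apply Real.exp_le_exp.2
        have : 0 ≤ k * y := by positivity
        linarith
      have he2 : |gs ν 0 - gs ν ((y / 2) ^ 2)|
          ≤ (y ^ 2 / 4) * Real.exp (y ^ 2 / 4) / Real.Gamma (ν + 1) := by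
        rw [h24]
        exact gs_sub hν (by positivity)
      rw [Real.norm_eq_abs, abs_mul, abs_div, abs_of_pos hy0,
        abs_of_nonneg (Real.exp_nonneg _)]
      have hmid : |gs ν 0 - gs ν ((y / 2) ^ 2)| / y
          ≤ ((y ^ 2 / 4) * Real.exp (y ^ 2 / 4) / Real.Gamma (ν + 1)) / y := by
        gcongr
      calc Real.exp (-(k * y) / 2) * (|gs ν 0 - gs ν ((y / 2) ^ 2)| / y)
          ≤ 1 * (((y ^ 2 / 4) * Real.exp (y ^ 2 / 4) / Real.Gamma (ν + 1)) / y) :=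
            mul_le_mul hexple hmid (by positivity) zero_le_one
        _ = (y / 4) * Real.exp (y ^ 2 / 4) / Real.Gamma (ν + 1) := by
            field_simp
    · have hc : Continuous (fun y : ℝ => (y / 4) * Real.exp (y ^ 2 / 4) / Real.Gamma (ν + 1)) := by
        fun_prop
      have h0 := hc.tendsto 0
      norm_num at h0
      exact h0.mono_left nhdsWithin_le_nhds
  have hsum := hA.add hB
  have hval : (k / 2) * (1 / Real.Gamma (ν + 1)) + 0 = k / (2 * Real.Gamma (ν + 1)) := by ring
  rw [hval] at hsum
  apply hsum.congr
  intro y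
  rw [Hf, gs_zero hν]
  ring

lemma fker_contOn {ν k : ℝ} (hν : 0 < ν) (hk : 0 < k) :
    ContinuousOn (fker ν k) (Ioi (0:ℝ)) := by
  intro y hy
  have hy0 : (0:ℝ) < y := hy
  apply ContinuousAt.continuousWithinAt
  have hbes : ContinuousAt (besselI ν) y := by
    have hc : ContinuousAt (fun z : ℝ => (z / 2) ^ ν * gs ν ((z / 2) ^ 2)) y := by
      have hdiv : ContinuousAt (fun z : ℝ => z / 2) y := continuousAt_id.div_const 2
      have hrc : ContinuousAt (fun w : ℝ => w ^ ν) (y / 2) :=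
        Real.continuousAt_rpow_const (y / 2) ν (Or.inl (by positivity))
      have h1 : ContinuousAt (fun z : ℝ => (z / 2) ^ ν) y := by
        have h := ContinuousAt.comp (x := y) hrc hdiv
        exact h
      have hsq : ContinuousAt (fun z : ℝ => (z / 2) ^ 2) y := hdiv.pow 2
      have h2 : ContinuousAt (fun z : ℝ => gs ν ((z / 2) ^ 2)) y := by
        have h := ContinuousAt.comp (x := y) (gs_contAt hν ((y / 2) ^ 2)) hsq
        exact h
      exact h1.mul h2
    apply hc.congr
    filter_upwards [isOpen_Ioi.mem_nhds hy] with z hz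
    exact (besselI_eq hν hz).symm
  show ContinuousAt (fun y : ℝ => y⁻¹ * Real.exp (-y / (2 * k)) *
    (y ^ ν / ((2:ℝ) ^ ν * Real.Gamma (1 + ν)) - Real.exp (-(k * y) / 2) * besselI ν y)) y
  apply ContinuousAt.mul
  apply ContinuousAt.mul
  · exact continuousAt_inv₀ (ne_of_gt hy0)
  · exact Real.continuous_exp.continuousAt.comp (by fun_prop)
  · apply ContinuousAt.sub
    · exact (Real.continuousAt_rpow_const y ν (Or.inl hy0.ne')).div_const _
    · exact (Real.continuous_exp.continuousAt.comp (by fun_prop)).mul hbes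

lemma fker_bound {ν k : ℝ} (hν : 0 < ν) (hk : 0 < k) {y u : ℝ} (hy : 0 < y) (hyu : y ≤ u) :
    |fker ν k y| ≤ (u / 2) ^ ν * ((k / 2 + (u / 4) * Real.exp (u ^ 2 / 4)) / Real.Gamma (ν + 1)) := by
  have hg1 : 0 < Real.Gamma (ν + 1) := Real.Gamma_pos_of_pos (by linarith)
  have hu : 0 < u := lt_of_lt_of_le hy hyu
  rw [fker_eq hν hy, abs_mul, abs_mul]
  have h1 : |Real.exp (-y / (2 * k))| ≤ 1 := by
    rw [abs_of_nonneg (Real.exp_nonneg _), ← Real.exp_zero]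
    apply Real.exp_le_exp.2
    exact div_nonpos_of_nonpos_of_nonneg (neg_nonpos.2 hy.le) (by positivity)
  have h2 : |(y / 2 : ℝ) ^ ν| ≤ (u / 2) ^ ν := by
    rw [abs_of_nonneg (Real.rpow_nonneg (by linarith) _)]
    exact Real.rpow_le_rpow (by linarith) (by linarith) hν.le
  have h3 : |Hf ν k y / y| ≤ (k / 2 + (u / 4) * Real.exp (u ^ 2 / 4)) / Real.Gamma (ν + 1) := by
    rw [abs_div, abs_of_pos hy, div_le_iff₀ hy]
    calc |Hf ν k y| ≤ y * (k / 2 + (y / 4) * Real.exp (y ^ 2 / 4)) / Real.Gamma (ν + 1) :=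
        hf_abs_le hν hk hy
      _ ≤ y * (k / 2 + (u / 4) * Real.exp (u ^ 2 / 4)) / Real.Gamma (ν + 1) := by
          gcongr <;> linarith
      _ = (k / 2 + (u / 4) * Real.exp (u ^ 2 / 4)) / Real.Gamma (ν + 1) * y := by ring
  calc |Real.exp (-y / (2 * k))| * |(y / 2 : ℝ) ^ ν| * |Hf ν k y / y|
      ≤ 1 * ((u / 2) ^ ν) * ((k / 2 + (u / 4) * Real.exp (u ^ 2 / 4)) / Real.Gamma (ν + 1)) :=
        mul_le_mul (mul_le_mul h1 h2 (abs_nonneg _) zero_le_one) h3 (abs_nonneg _)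
          (by positivity)
    _ = _ := by rw [one_mul]

lemma fker_intble {ν k : ℝ} (hν : 0 < ν) (hk : 0 < k) {u : ℝ} (hu : 0 < u) :
    IntervalIntegrable (fker ν k) volume 0 u := by
  rw [intervalIntegrable_iff_integrableOn_Ioc_of_le hu.le]
  have hmeas : AEStronglyMeasurable (fker ν k) (volume.restrict (Ioc 0 u)) :=
    ((fker_contOn hν hk).mono Ioc_subset_Ioi_self).aestronglyMeasurable measurableSet_Ioc
  apply Integrable.mono'
    (g := fun _ : ℝ => (u / 2) ^ ν * ((k / 2 + (u / 4) * Real.exp (u ^ 2 / 4)) / Real.Gamma (ν + 1)))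
  · exact integrableOn_const measure_Ioc_lt_top.ne
  · exact hmeas
  · rw [ae_restrict_iff' measurableSet_Ioc]
    refine Eventually.of_forall fun y hy => ?_
    rw [Real.norm_eq_abs]
    exact fker_bound hν hk hy.1 hy.2

lemma F_tendsto {ν k : ℝ} (hν : 0 < ν) (hk : 0 < k) :
    Tendsto (fun u : ℝ => (∫ y in (0:ℝ)..u, fker ν k y) / u ^ (ν + 1)) (𝓝[>] (0:ℝ))
      (𝓝 ((k / (2 * Real.Gamma (ν + 1))) * (1 / ((ν + 1) * (2:ℝ) ^ ν)))) := by
  have hg1 : 0 < Real.Gamma (ν + 1) := Real.Gamma_pos_of_pos (by linarith)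
  set C : ℝ := ((1:ℝ) / 2) ^ ν * ((k / 2 + ((1:ℝ) / 4) * Real.exp ((1:ℝ) ^ 2 / 4))
    / Real.Gamma (ν + 1)) with hC
  have hff' : ∀ x ∈ Ioo (0:ℝ) 1,
      HasDerivAt (fun u : ℝ => ∫ y in (0:ℝ)..u, fker ν k y) (fker ν k x) x := by
    intro x hx
    exact intervalIntegral.integral_hasDerivAt_right (fker_intble hν hk hx.1)
      ((fker_contOn hν hk).stronglyMeasurableAtFilter isOpen_Ioi x hx.1)
      ((fker_contOn hν hk).continuousAt (isOpen_Ioi.mem_nhds hx.1))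
  have hgg' : ∀ x ∈ Ioo (0:ℝ) 1,
      HasDerivAt (fun u : ℝ => u ^ (ν + 1)) ((ν + 1) * x ^ ν) x := by
    intro x hx
    have h := Real.hasDerivAt_rpow_const (x := x) (p := ν + 1) (Or.inl hx.1.ne')
    simpa [add_sub_cancel_right] using h
  have hg'ne : ∀ x ∈ Ioo (0:ℝ) 1, (ν + 1) * x ^ ν ≠ 0 := by
    intro x hx
    have hx0 := hx.1
    have : (0:ℝ) < (ν + 1) * x ^ ν := by positivity
    exact this.ne'
  have hfa : Tendsto (fun u : ℝ => ∫ y in (0:ℝ)..u, fker ν k y) (𝓝[>] (0:ℝ)) (𝓝 0) := by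
    apply squeeze_zero_norm' (a := fun u : ℝ => C * |u - 0|)
    · filter_upwards [Ioo_mem_nhdsGT_of_mem
        (show (0:ℝ) ∈ Ico (0:ℝ) 1 from ⟨le_refl _, zero_lt_one⟩)] with u hu
      apply intervalIntegral.norm_integral_le_of_norm_le_const
      intro y hy
      rw [uIoc_of_le hu.1.le] at hy
      rw [Real.norm_eq_abs, hC]
      exact fker_bound hν hk hy.1 (hy.2.trans hu.2.le)
    · have hcont : Continuous (fun u : ℝ => C * |u - 0|) := by fun_prop
      have h0 := hcont.tendsto 0
      have hz : C * |(0:ℝ) - 0| = 0 := by simp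
      rw [hz] at h0
      exact h0.mono_left nhdsWithin_le_nhds
  have hga : Tendsto (fun u : ℝ => u ^ (ν + 1)) (𝓝[>] (0:ℝ)) (𝓝 0) := by
    have hc := (Real.continuousAt_rpow_const 0 (ν + 1) (Or.inr (by linarith))).tendsto
    rw [Real.zero_rpow (by linarith : ν + 1 ≠ 0)] at hc
    exact hc.mono_left nhdsWithin_le_nhds
  have hdiv : Tendsto (fun x : ℝ => fker ν k x / ((ν + 1) * x ^ ν)) (𝓝[>] (0:ℝ))
      (𝓝 ((k / (2 * Real.Gamma (ν + 1))) * (1 / ((ν + 1) * (2:ℝ) ^ ν)))) := by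
    have hexp : Tendsto (fun y : ℝ => Real.exp (-y / (2 * k))) (𝓝[>] (0:ℝ)) (𝓝 1) := by
      have hc : Continuous (fun y : ℝ => Real.exp (-y / (2 * k))) := by fun_prop
      have h0 := hc.tendsto 0
      have he : Real.exp (-(0:ℝ) / (2 * k)) = 1 := by norm_num
      rw [he] at h0
      exact h0.mono_left nhdsWithin_le_nhds
    have hmul := (hexp.mul (hf_div_tendsto hν hk)).mul_const (1 / ((ν + 1) * (2:ℝ) ^ ν))
    rw [one_mul] at hmul
    apply hmul.congr'
    filter_upwards [self_mem_nhdsWithin] with y hy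
    have hy0 : (0:ℝ) < y := hy
    rw [fker_eq hν hy0, Real.div_rpow hy0.le (by norm_num : (0:ℝ) ≤ 2)]
    have hyν : (y:ℝ) ^ ν ≠ 0 := by positivity
    have h2ν : ((2:ℝ) ^ ν) ≠ 0 := by positivity
    field_simp
  exact HasDerivAt.lhopital_zero_right_on_Ioo zero_lt_one hff' hgg' hg'ne hfa hga hdiv

end Stmt8Aux

theorem stmt_8 (ν k : ℝ) (hν : 0 < ν) (hk : 0 < k) :
    Filter.Tendsto (fun t : ℝ => t ^ (ν + 1) * rBes ν k t) Filter.atTop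
      (nhds (k ^ 2 / ((2:ℝ) ^ (ν + 1) * (ν + 1) * Real.Gamma ν))) := by
  have hΓν : 0 < Real.Gamma ν := Real.Gamma_pos_of_pos hν
  have hkt : Tendsto (fun t : ℝ => k / t) atTop (𝓝[>] (0:ℝ)) := by
    rw [tendsto_nhdsWithin_iff]
    constructor
    · have h := tendsto_inv_atTop_zero.const_mul k
      simp only [mul_zero] at h
      exact h.congr fun t => (div_eq_mul_inv k t).symm
    · filter_upwards [eventually_gt_atTop (0:ℝ)] with t ht
      exact div_pos hk ht
  have hcomp := (Stmt8Aux.F_tendsto hν hk).comp hkt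
  have hmain := hcomp.const_mul (ν * k)
  have hval : (ν * k) * ((k / (2 * Real.Gamma (ν + 1))) * (1 / ((ν + 1) * (2:ℝ) ^ ν)))
      = k ^ 2 / ((2:ℝ) ^ (ν + 1) * (ν + 1) * Real.Gamma ν) := by
    rw [Real.Gamma_add_one hν.ne']
    rw [show (2:ℝ) ^ (ν + 1) = (2:ℝ) ^ ν * 2 by
      rw [Real.rpow_add (by norm_num : (0:ℝ) < 2), Real.rpow_one]]
    have h2ν : ((2:ℝ) ^ ν) ≠ 0 := by positivity
    field_simp
  rw [hval] at hmain
  apply hmain.congr'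
  filter_upwards [eventually_gt_atTop (0:ℝ)] with t ht
  simp only [Function.comp]
  have hrb : rBes ν k t = ν * k ^ (-ν) * ∫ y in (0:ℝ)..(k / t), Stmt8Aux.fker ν k y := rfl
  rw [hrb, Real.div_rpow hk.le ht.le]
  have h1 : (k:ℝ) ^ (ν + 1) ≠ 0 := by positivity
  have h2 : (t:ℝ) ^ (ν + 1) ≠ 0 := by positivity
  have hkν : (k:ℝ) ^ (-ν) = k / k ^ (ν + 1) := by
    rw [eq_div_iff h1, ← Real.rpow_add hk, show -ν + (ν + 1) = 1 by ring, Real.rpow_one]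
  rw [hkν]
  field_simp
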